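/- Let (Ω, P) be a probability space, let A : [0,1] → [1/2, 1], and let Z₁, Z₂ : Ω → ℝ be random variables with Z₁ > 0 and Z₂ > 0 almost surely whose joint distribution satisfies P(Z₁ ≤ z₁, Z₂ ≤ z₂) = exp{−(1/z₁ + 1/z₂) A(z₁/(z₁+z₂))} for all z₁, z₂ > 0. Fix ω ∈ (0,1), let γ be the Euler–Mascheroni constant, and define Y := log(max((1−ω) Z₁, ω Z₂)) − γ. Then P(Y ≤ y) = exp(−A(ω) e^{−(y+γ)}) for all y ∈ ℝ; equivalently, Y is distributed as log A(ω) + ε with ε ∼ Gumbel(−γ, 1). -/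

import Mathlib

open MeasureTheory Real

/-- LogMax-projection along an arbitrary direction `ω ∈ (0,1)`: for a bivariate simple
max-stable vector with Pickands dependence function `A`, the variable
`Y = log(max((1-ω)Z₁, ω Z₂)) - γ` satisfies `P(Y ≤ y) = exp(-A(ω) e^{-(y+γ)})`. -/
theorem stmt_5 {Ω : Type*} [MeasurableSpace Ω] (P : Measure Ω) [IsProbabilityMeasure P]
    (A : ℝ → ℝ) (hA : ∀ t ∈ Set.Icc (0 : ℝ) 1, A t ∈ Set.Icc (1 / 2 : ℝ) 1)
    (Z₁ Z₂ : Ω → ℝ) (hZ₁meas : Measurable Z₁) (hZ₂meas : Measurable Z₂)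
    (hZ₁pos : ∀ᵐ o ∂P, 0 < Z₁ o) (hZ₂pos : ∀ᵐ o ∂P, 0 < Z₂ o)
    (hjoint : ∀ z₁ z₂ : ℝ, 0 < z₁ → 0 < z₂ →
      P {o | Z₁ o ≤ z₁ ∧ Z₂ o ≤ z₂} =
        ENNReal.ofReal (Real.exp (-((1 / z₁ + 1 / z₂) * A (z₁ / (z₁ + z₂))))))
    (ω : ℝ) (hω : ω ∈ Set.Ioo (0 : ℝ) 1)
    (Y : Ω → ℝ)
    (hY : Y = fun o =>
      Real.log (max ((1 - ω) * Z₁ o) (ω * Z₂ o)) - Real.eulerMascheroniConstant) :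
    ∀ y : ℝ,
      P {o | Y o ≤ y} =
        ENNReal.ofReal (Real.exp (-A ω * Real.exp (-(y + Real.eulerMascheroniConstant)))) := by
  intro y
  obtain ⟨hω0, hω1⟩ := hω
  have h1ω : 0 < 1 - ω := by linarith
  set c : ℝ := y + Real.eulerMascheroniConstant with hc
  set z : ℝ := Real.exp c with hz
  have hzpos : 0 < z := Real.exp_pos c
  have hz₁ : 0 < z / (1 - ω) := div_pos hzpos h1ω
  have hz₂ : 0 < z / ω := div_pos hzpos hω0
  have hset : {o | Y o ≤ y} =ᵐ[P] {o | Z₁ o ≤ z / (1 - ω) ∧ Z₂ o ≤ z / ω} := by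
    filter_upwards [hZ₁pos, hZ₂pos] with o h1 h2
    have hmaxpos : 0 < max ((1 - ω) * Z₁ o) (ω * Z₂ o) :=
      lt_max_of_lt_left (mul_pos h1ω h1)
    have : (Y o ≤ y) ↔ (Z₁ o ≤ z / (1 - ω) ∧ Z₂ o ≤ z / ω) := by
      rw [hY]
      simp only [sub_le_iff_le_add]
      rw [show y + Real.eulerMascheroniConstant = c from rfl,
        Real.log_le_iff_le_exp hmaxpos, ← hz, max_le_iff,
        ← le_div_iff₀' h1ω, ← le_div_iff₀' hω0]
    exact propext this
  rw [measure_congr hset, hjoint _ _ hz₁ hz₂]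
  congr 1
  have harg : z / (1 - ω) / (z / (1 - ω) + z / ω) = ω := by
    field_simp
    ring
  have hsum : 1 / (z / (1 - ω)) + 1 / (z / ω) = 1 / z := by
    field_simp
    ring
  rw [harg, hsum,
    show (-A ω * rexp (-(y + eulerMascheroniConstant))) = -(1 / z * A ω) by
      rw [show y + eulerMascheroniConstant = c from rfl, Real.exp_neg, ← hz]
      field_simp]
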